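/- Let U₁, U₂ be twice continuously differentiable with Uᵢ' > 0 and h₁, h₂ : [0,1] → [0,1] twice continuously differentiable with hᵢ' > 0, hᵢ(0)=0, hᵢ(1)=1. Suppose -U₂''/U₂' ≥ -U₁''/U₁' everywhere and -h₂''/h₂' ≥ -h₁''/h₁' on (0,1). Then for all x₀, all ε₁ > 0, and all 0 < ε₂ ≤ min(p₀,1-p₀) with p₀ < 1, the RDU risk premia satisfy σ₂(x₀,p₀,ε₁,ε₂) ≥ σ₁(x₀,p₀,ε₁,ε₂), where σᵢ solves (hᵢ(p₀+ε₂)-hᵢ(p₀-ε₂))·Uᵢ(x₀-σᵢ) = (hᵢ(p₀)-hᵢ(p₀-ε₂))·Uᵢ(x₀-ε₁) + (hᵢ(p₀+ε₂)-hᵢ(p₀))·Uᵢ(x₀+ε₁). -/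

import Mathlib

open Set

set_option maxHeartbeats 1000000


/-- Second-derivative data from `ContDiff ℝ 2`. -/
lemma aux_cd2 {f : ℝ → ℝ} (hf : ContDiff ℝ 2 f) :
    Differentiable ℝ (deriv f) := by
  have h2 : (2 : WithTop ℕ∞) = 1 + 1 := by norm_num
  rw [h2] at hf
  exact (contDiff_succ_iff_deriv.mp hf).2.2.differentiable one_ne_zero

/-- Core ratio lemma: if f is "more concave" than g (f''/f' ≤ g''/g') on (a,b),
both with positive derivatives, then the slope comparison holds. -/
lemma ratio_key (f g : ℝ → ℝ) (a m b : ℝ) (ham : a < m) (hmb : m < b)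
    (hf : ContDiff ℝ 2 f) (hg : ContDiff ℝ 2 g)
    (hf' : ∀ x ∈ Ioo a b, 0 < deriv f x) (hg' : ∀ x ∈ Ioo a b, 0 < deriv g x)
    (hidx : ∀ x ∈ Ioo a b, deriv (deriv f) x * deriv g x ≤ deriv (deriv g) x * deriv f x) :
    (g m - g a) * (f b - f m) ≤ (f m - f a) * (g b - g m) := by
  have hab : a < b := ham.trans hmb
  have hdf : Differentiable ℝ f := hf.differentiable two_ne_zero
  have hdg : Differentiable ℝ g := hg.differentiable two_ne_zero
  have hdf' : Differentiable ℝ (deriv f) := aux_cd2 hf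
  have hdg' : Differentiable ℝ (deriv g) := aux_cd2 hg
  -- Cauchy MVT on [a,m] and [m,b]
  obtain ⟨c, hc, hceq⟩ : ∃ c ∈ Ioo a m, (g m - g a) * deriv f c = (f m - f a) * deriv g c :=
    exists_ratio_deriv_eq_ratio_slope f ham hdf.continuous.continuousOn
      (fun x _ => hdf.differentiableAt.differentiableWithinAt) g
      hdg.continuous.continuousOn (fun x _ => hdg.differentiableAt.differentiableWithinAt)
  obtain ⟨d, hd, hdeq⟩ : ∃ d ∈ Ioo m b, (g b - g m) * deriv f d = (f b - f m) * deriv g d :=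
    exists_ratio_deriv_eq_ratio_slope f hmb hdf.continuous.continuousOn
      (fun x _ => hdf.differentiableAt.differentiableWithinAt) g
      hdg.continuous.continuousOn (fun x _ => hdg.differentiableAt.differentiableWithinAt)
  have hcab : c ∈ Ioo a b := ⟨hc.1, hc.2.trans hmb⟩
  have hdab : d ∈ Ioo a b := ⟨ham.trans hd.1, hd.2⟩
  -- the ratio f'/g' is antitone on (a,b)
  have hanti : AntitoneOn (fun x => deriv f x / deriv g x) (Ioo a b) := by
    apply antitoneOn_of_deriv_nonpos (convex_Ioo a b)
    · exact ContinuousOn.div (hdf'.continuous.continuousOn) (hdg'.continuous.continuousOn)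
        (fun x hx => (hg' x hx).ne')
    · rw [interior_Ioo]
      exact fun x hx => (hdf'.differentiableAt.div hdg'.differentiableAt
        (hg' x hx).ne').differentiableWithinAt
    · rw [interior_Ioo]
      intro x hx
      rw [deriv_fun_div hdf'.differentiableAt hdg'.differentiableAt (hg' x hx).ne']
      apply div_nonpos_of_nonpos_of_nonneg
      · nlinarith [hidx x hx]
      · positivity
  have hrat : deriv f d / deriv g d ≤ deriv f c / deriv g c :=
    hanti hcab hdab (hc.2.trans hd.1).le
  have hcross : deriv f d * deriv g c ≤ deriv f c * deriv g d := by
    rw [div_le_div_iff₀ (hg' d hdab) (hg' c hcab)] at hrat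
    linarith
  -- positivity of increments via strict monotonicity
  have hgm : StrictMonoOn g (Icc a b) := by
    apply strictMonoOn_of_deriv_pos (convex_Icc a b) hdg.continuous.continuousOn
    rw [interior_Icc]; exact hg'
  have hfm : StrictMonoOn f (Icc a b) := by
    apply strictMonoOn_of_deriv_pos (convex_Icc a b) hdf.continuous.continuousOn
    rw [interior_Icc]; exact hf'
  have haI : a ∈ Icc a b := ⟨le_refl a, hab.le⟩
  have hmI : m ∈ Icc a b := ⟨ham.le, hmb.le⟩
  have hbI : b ∈ Icc a b := ⟨hab.le, le_refl b⟩
  have h1 : 0 < g m - g a := sub_pos.mpr (hgm haI hmI ham)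
  have h2 : 0 < g b - g m := sub_pos.mpr (hgm hmI hbI hmb)
  have h3 : 0 < f m - f a := sub_pos.mpr (hfm haI hmI ham)
  have h4 : 0 < f b - f m := sub_pos.mpr (hfm hmI hbI hmb)
  have hgc : 0 < deriv g c := hg' c hcab
  have hgd : 0 < deriv g d := hg' d hdab
  have hfc : 0 < deriv f c := hf' c hcab
  have hfd : 0 < deriv f d := hf' d hdab
  rw [← mul_le_mul_iff_of_pos_right (mul_pos hgc hgd)]
  calc (g m - g a) * (f b - f m) * (deriv g c * deriv g d)
      = (g m - g a) * ((f b - f m) * deriv g d) * deriv g c := by ring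
    _ = (g m - g a) * ((g b - g m) * deriv f d) * deriv g c := by rw [hdeq]
    _ = (g b - g m) * (g m - g a) * (deriv f d * deriv g c) := by ring
    _ ≤ (g b - g m) * (g m - g a) * (deriv f c * deriv g d) := by
        apply mul_le_mul_of_nonneg_left hcross; positivity
    _ = (g b - g m) * ((g m - g a) * deriv f c) * deriv g d := by ring
    _ = (g b - g m) * ((f m - f a) * deriv g c) * deriv g d := by rw [hceq]
    _ = (f m - f a) * (g b - g m) * (deriv g c * deriv g d) := by ring

/-- Global comparative risk aversion for the RDU risk premium. -/
theorem rdu_comparative_risk_premium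
    (U₁ U₂ h₁ h₂ : ℝ → ℝ)
    (hUC1 : ContDiff ℝ 2 U₁) (hUC2 : ContDiff ℝ 2 U₂)
    (hUd1 : ∀ x, 0 < deriv U₁ x) (hUd2 : ∀ x, 0 < deriv U₂ x)
    (hhC1 : ContDiff ℝ 2 h₁) (hhC2 : ContDiff ℝ 2 h₂)
    (hmap1 : MapsTo h₁ (Icc 0 1) (Icc 0 1)) (hmap2 : MapsTo h₂ (Icc 0 1) (Icc 0 1))
    (hhd1 : ∀ p ∈ Icc (0:ℝ) 1, 0 < deriv h₁ p)
    (hhd2 : ∀ p ∈ Icc (0:ℝ) 1, 0 < deriv h₂ p)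
    (h10 : h₁ 0 = 0) (h11 : h₁ 1 = 1) (h20 : h₂ 0 = 0) (h21 : h₂ 1 = 1)
    (hUidx : ∀ x, -(deriv (deriv U₂) x) / deriv U₂ x ≥
      -(deriv (deriv U₁) x) / deriv U₁ x)
    (hhidx : ∀ p ∈ Ioo (0:ℝ) 1,
      -(deriv (deriv h₂) p) / deriv h₂ p ≥ -(deriv (deriv h₁) p) / deriv h₁ p) :
    ∀ x₀ p₀ ε₁ ε₂ σ₁ σ₂ : ℝ, 0 < ε₁ → 0 < ε₂ → ε₂ ≤ min p₀ (1 - p₀) → p₀ < 1 →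
      (h₁ (p₀ + ε₂) - h₁ (p₀ - ε₂)) * U₁ (x₀ - σ₁) =
        (h₁ p₀ - h₁ (p₀ - ε₂)) * U₁ (x₀ - ε₁) +
        (h₁ (p₀ + ε₂) - h₁ p₀) * U₁ (x₀ + ε₁) →
      (h₂ (p₀ + ε₂) - h₂ (p₀ - ε₂)) * U₂ (x₀ - σ₂) =
        (h₂ p₀ - h₂ (p₀ - ε₂)) * U₂ (x₀ - ε₁) +
        (h₂ (p₀ + ε₂) - h₂ p₀) * U₂ (x₀ + ε₁) →
      σ₁ ≤ σ₂ := by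
  intro x₀ p₀ ε₁ ε₂ σ₁ σ₂ hε₁ hε₂ hε₂le hp₀1 eq1 eq2
  have hε₂p : ε₂ ≤ p₀ := le_trans hε₂le (min_le_left _ _)
  have hε₂q : ε₂ ≤ 1 - p₀ := le_trans hε₂le (min_le_right _ _)
  set a := p₀ - ε₂ with ha
  set b := p₀ + ε₂ with hb
  have ha0 : 0 ≤ a := by simp [ha]; linarith
  have hb1 : b ≤ 1 := by simp [hb]; linarith
  have ham : a < p₀ := by simp [ha]; linarith
  have hmb : p₀ < b := by simp [hb]; linarith
  have hsub : Ioo a b ⊆ Ioo (0:ℝ) 1 := fun x hx => ⟨lt_of_le_of_lt ha0 hx.1, lt_of_lt_of_le hx.2 hb1⟩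
  have hsubI : Ioo a b ⊆ Icc (0:ℝ) 1 := fun x hx => ⟨le_of_lt (hsub hx).1, le_of_lt (hsub hx).2⟩
  -- weight comparison from ratio_key applied to h₂ (more concave) vs h₁
  have hwt : (h₁ p₀ - h₁ a) * (h₂ b - h₂ p₀) ≤ (h₂ p₀ - h₂ a) * (h₁ b - h₁ p₀) := by
    apply ratio_key h₂ h₁ a p₀ b ham hmb hhC2 hhC1
      (fun x hx => hhd2 x (hsubI hx)) (fun x hx => hhd1 x (hsubI hx))
    intro x hx
    have hix := hhidx x (hsub hx)
    have d1 := hhd1 x (hsubI hx)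
    have d2 := hhd2 x (hsubI hx)
    rw [ge_iff_le, div_le_div_iff₀ d1 d2] at hix
    nlinarith
  -- monotonicity of h's on [0,1]
  have h1mono : StrictMonoOn h₁ (Icc 0 1) := by
    apply strictMonoOn_of_deriv_pos (convex_Icc 0 1)
      (hhC1.continuous.continuousOn)
    rw [interior_Icc]; exact fun x hx => hhd1 x ⟨hx.1.le, hx.2.le⟩
  have h2mono : StrictMonoOn h₂ (Icc 0 1) := by
    apply strictMonoOn_of_deriv_pos (convex_Icc 0 1)
      (hhC2.continuous.continuousOn)
    rw [interior_Icc]; exact fun x hx => hhd2 x ⟨hx.1.le, hx.2.le⟩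
  have haI : a ∈ Icc (0:ℝ) 1 := ⟨ha0, by linarith⟩
  have hpI : p₀ ∈ Icc (0:ℝ) 1 := ⟨by linarith, hp₀1.le⟩
  have hbI : b ∈ Icc (0:ℝ) 1 := ⟨by linarith [ham, ha0], hb1⟩
  have hA1 : 0 < h₁ p₀ - h₁ a := sub_pos.mpr (h1mono haI hpI ham)
  have hB1 : 0 < h₁ b - h₁ p₀ := sub_pos.mpr (h1mono hpI hbI hmb)
  have hA2 : 0 < h₂ p₀ - h₂ a := sub_pos.mpr (h2mono haI hpI ham)
  have hB2 : 0 < h₂ b - h₂ p₀ := sub_pos.mpr (h2mono hpI hbI hmb)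
  -- utilities strictly increasing
  have hU1mono : StrictMono U₁ := strictMono_of_deriv_pos hUd1
  have hU2mono : StrictMono U₂ := strictMono_of_deriv_pos hUd2
  set lo := x₀ - ε₁ with hlo
  set hi := x₀ + ε₁ with hhi
  have hlohi : lo < hi := by simp [hlo, hhi]; linarith
  have hUlohi1 : U₁ lo < U₁ hi := hU1mono hlohi
  have hUlohi2 : U₂ lo < U₂ hi := hU2mono hlohi
  -- locate m' = x₀ - σ₁ strictly between lo and hi
  set m' := x₀ - σ₁ with hm'
  have hUm1lo : U₁ lo < U₁ m' := by nlinarith [eq1]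
  have hUm1hi : U₁ m' < U₁ hi := by nlinarith [eq1]
  have hlom : lo < m' := hU1mono.lt_iff_lt.mp hUm1lo
  have hmhi : m' < hi := hU1mono.lt_iff_lt.mp hUm1hi
  -- Pratt step via ratio_key applied to U₂ vs U₁
  have hU : (U₁ m' - U₁ lo) * (U₂ hi - U₂ m') ≤ (U₂ m' - U₂ lo) * (U₁ hi - U₁ m') := by
    apply ratio_key U₂ U₁ lo m' hi hlom hmhi hUC2 hUC1
      (fun x _ => hUd2 x) (fun x _ => hUd1 x)
    intro x _
    have hix := hUidx x
    have d1 := hUd1 x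
    have d2 := hUd2 x
    rw [ge_iff_le, div_le_div_iff₀ d1 d2] at hix
    nlinarith [hix]
  have hUm2lo : 0 < U₂ m' - U₂ lo := sub_pos.mpr (hU2mono hlom)
  have hUm2hi : 0 < U₂ hi - U₂ m' := sub_pos.mpr (hU2mono hmhi)
  have hP : 0 < U₁ m' - U₁ lo := sub_pos.mpr (hU1mono hlom)
  have hQ : 0 < U₁ hi - U₁ m' := sub_pos.mpr (hU1mono hmhi)
  -- from eq1: A₁ * P = B₁ * Q
  have heq1' : (h₁ p₀ - h₁ a) * (U₁ m' - U₁ lo) = (h₁ b - h₁ p₀) * (U₁ hi - U₁ m') := by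
    nlinarith [eq1]
  -- key: A₂ (U₂ m' - U₂ lo) ≥ B₂ (U₂ hi - U₂ m')
  have hkey : (h₂ b - h₂ p₀) * (U₂ hi - U₂ m') ≤ (h₂ p₀ - h₂ a) * (U₂ m' - U₂ lo) := by
    rw [← mul_le_mul_iff_of_pos_right (mul_pos hA1 hQ)]
    calc (h₂ b - h₂ p₀) * (U₂ hi - U₂ m') * ((h₁ p₀ - h₁ a) * (U₁ hi - U₁ m'))
        = (h₂ b - h₂ p₀) * (h₁ p₀ - h₁ a) * ((U₁ hi - U₁ m') * (U₂ hi - U₂ m')) := by ring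
      _ ≤ (h₂ p₀ - h₂ a) * (h₁ b - h₁ p₀) * ((U₁ hi - U₁ m') * (U₂ hi - U₂ m')) := by
          apply mul_le_mul_of_nonneg_right _ (by positivity)
          nlinarith [hwt]
      _ = (h₂ p₀ - h₂ a) * ((h₁ b - h₁ p₀) * (U₁ hi - U₁ m')) * (U₂ hi - U₂ m') := by ring
      _ = (h₂ p₀ - h₂ a) * ((h₁ p₀ - h₁ a) * (U₁ m' - U₁ lo)) * (U₂ hi - U₂ m') := by
          rw [heq1']
      _ = (h₂ p₀ - h₂ a) * (h₁ p₀ - h₁ a) * ((U₁ m' - U₁ lo) * (U₂ hi - U₂ m')) := by ring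
      _ ≤ (h₂ p₀ - h₂ a) * (h₁ p₀ - h₁ a) * ((U₂ m' - U₂ lo) * (U₁ hi - U₁ m')) := by
          apply mul_le_mul_of_nonneg_left hU (by positivity)
      _ = (h₂ p₀ - h₂ a) * (U₂ m' - U₂ lo) * ((h₁ p₀ - h₁ a) * (U₁ hi - U₁ m')) := by ring
  -- conclude
  have hfin : U₂ (x₀ - σ₂) ≤ U₂ m' := by
    have hD2 : 0 < h₂ b - h₂ a := by linarith
    rw [← mul_le_mul_iff_of_pos_left hD2]
    have : (h₂ b - h₂ a) * U₂ m' = (h₂ p₀ - h₂ a) * U₂ m' + (h₂ b - h₂ p₀) * U₂ m' := by ring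
    rw [eq2, this]
    nlinarith [hkey]
  have := hU2mono.le_iff_le.mp hfin
  simp [hm'] at this ⊢
  linarith
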